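/- Let (h, ρ, v) be a staircase datum. Then |Δ| − ρ_h·v_h ≤ Σ_{i=0}^{h−1} δᵢ·ρ̄ᵢ − ρ̄_{i₀}/2, where the sum is over all indices 0 ≤ i ≤ h−1 (indices with δᵢ = 0 contribute nothing). -/

import Mathlib

open Pointwise MeasureTheory

noncomputable section

/-- The closed first quadrant in `ℝ²`. -/
def quadrant : Set (ℝ × ℝ) := {p | 0 ≤ p.1 ∧ 0 ≤ p.2}

/-- The set of lattice points `Γ = {(vᵢ, ρᵢ) : 0 ≤ i ≤ h}` of a staircase datum. -/
def stairPoints (h : ℕ) (ρ : ℕ → ℝ) (v : ℕ → ℕ) : Set (ℝ × ℝ) :=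
  (fun i => ((v i : ℝ), ρ i)) '' Set.Iic h

/-- The Newton polygon
`Δ := (ℝ≥0² \ conv(ℝ≥0² + Γ)) ∩ ([0, v_h] × ℝ≥0)` of a staircase datum. -/
def stairDelta (h : ℕ) (ρ : ℕ → ℝ) (v : ℕ → ℕ) : Set (ℝ × ℝ) :=
  (quadrant \ closure (convexHull ℝ (quadrant + stairPoints h ρ v))) ∩
    (Set.Icc (0 : ℝ) (v h : ℝ) ×ˢ Set.Ici (0 : ℝ))

/-- The trapezoid estimate: for a staircase datum `(h, ρ, v)`,
`|Δ| − ρ_h·v_h ≤ Σ_{i=0}^{h−1} δᵢ·ρ̄ᵢ − ρ̄_{i₀}/2`. -/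
private lemma trap_vol (a b ya yb : ℝ) (hab : a ≤ b) (hya : 0 ≤ ya) (hyb : 0 ≤ yb) :
    volume {p : ℝ × ℝ | a ≤ p.1 ∧ p.1 ≤ b ∧ 0 ≤ p.2 ∧
        (b - a) * p.2 ≤ (b - p.1) * ya + (p.1 - a) * yb} ≤
      ENNReal.ofReal ((b - a) * (ya + yb) / 2) := by
  rcases eq_or_lt_of_le hab with rfl | hlt
  · refine le_trans (measure_mono (show _ ⊆ ({a} : Set ℝ) ×ˢ (Set.univ : Set ℝ) from ?_)) ?_
    · rintro p ⟨h1, h2, -, -⟩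
      exact ⟨le_antisymm h2 h1, trivial⟩
    · rw [Measure.volume_eq_prod, Measure.prod_prod, Real.volume_singleton, zero_mul]
      exact zero_le
  · have hd : (0:ℝ) < b - a := sub_pos.2 hlt
    set f : ℝ → ℝ := fun x => ((b - x) * ya + (x - a) * yb) / (b - a) with hf
    have hfc : Continuous f := by
      apply Continuous.div_const
      exact ((continuous_const.sub continuous_id).mul continuous_const).add
        ((continuous_id.sub continuous_const).mul continuous_const)
    have hTeq : {p : ℝ × ℝ | a ≤ p.1 ∧ p.1 ≤ b ∧ 0 ≤ p.2 ∧
        (b - a) * p.2 ≤ (b - p.1) * ya + (p.1 - a) * yb}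
        = {p : ℝ × ℝ | p.1 ∈ Set.Icc a b ∧ p.2 ∈ Set.Icc 0 (f p.1)} := by
      ext p
      simp only [Set.mem_setOf_eq, Set.mem_Icc]
      constructor
      · rintro ⟨h1, h2, h3, h4⟩
        exact ⟨⟨h1, h2⟩, h3, (le_div_iff₀ hd).2 (by linarith)⟩
      · rintro ⟨⟨h1, h2⟩, h3, h4⟩
        have := (le_div_iff₀ hd).1 h4
        exact ⟨h1, h2, h3, by linarith⟩
    rw [hTeq]
    have hmeas : MeasurableSet {p : ℝ × ℝ | p.1 ∈ Set.Icc a b ∧ p.2 ∈ Set.Icc 0 (f p.1)} := by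
      have : {p : ℝ × ℝ | p.1 ∈ Set.Icc a b ∧ p.2 ∈ Set.Icc 0 (f p.1)}
          = (Prod.fst ⁻¹' Set.Icc a b) ∩ ({p : ℝ × ℝ | 0 ≤ p.2} ∩ {p : ℝ × ℝ | p.2 ≤ f p.1}) := by
        ext p; simp [Set.mem_Icc, and_assoc]
      rw [this]
      exact (measurableSet_Icc.preimage measurable_fst).inter
        ((measurableSet_le measurable_const measurable_snd).inter
          (measurableSet_le measurable_snd (hfc.measurable.comp measurable_fst)))
    rw [Measure.volume_eq_prod, Measure.prod_apply hmeas]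
    have hslice : ∀ x : ℝ,
        (volume : Measure ℝ) (Prod.mk x ⁻¹' {p : ℝ × ℝ | p.1 ∈ Set.Icc a b ∧ p.2 ∈ Set.Icc 0 (f p.1)})
        = Set.indicator (Set.Icc a b) (fun x => ENNReal.ofReal (f x)) x := by
      intro x
      by_cases hx : x ∈ Set.Icc a b
      · have hpre : Prod.mk x ⁻¹' {p : ℝ × ℝ | p.1 ∈ Set.Icc a b ∧ p.2 ∈ Set.Icc 0 (f p.1)}
            = Set.Icc 0 (f x) := Set.ext fun y => ⟨fun hy => hy.2, fun hy => ⟨hx, hy⟩⟩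
        rw [hpre, Real.volume_Icc, Set.indicator_of_mem hx, sub_zero]
      · have hpre : Prod.mk x ⁻¹' {p : ℝ × ℝ | p.1 ∈ Set.Icc a b ∧ p.2 ∈ Set.Icc 0 (f p.1)}
            = ∅ := Set.eq_empty_iff_forall_notMem.2 fun y hy => hx hy.1
        rw [hpre, measure_empty, Set.indicator_of_notMem hx]
    rw [lintegral_congr hslice, lintegral_indicator measurableSet_Icc]
    have hint : IntegrableOn f (Set.Icc a b) := hfc.integrableOn_Icc
    have hnn : 0 ≤ᵐ[volume.restrict (Set.Icc a b)] f := by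
      refine (ae_restrict_iff' measurableSet_Icc).2 (Filter.Eventually.of_forall fun x hx => ?_)
      exact div_nonneg (by nlinarith [hx.1, hx.2]) hd.le
    rw [← ofReal_integral_eq_lintegral_ofReal hint hnn]
    apply ENNReal.ofReal_le_ofReal
    rw [MeasureTheory.integral_Icc_eq_integral_Ioc, ← intervalIntegral.integral_of_le hab]
    have hci : IntervalIntegrable (fun x : ℝ => (yb - ya) / (b - a) * x) volume a b :=
      (continuous_const.mul continuous_id').intervalIntegrable a b
    have hcalc : (∫ x in a..b, f x) = (b - a) * (ya + yb) / 2 := by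
      have h1 : Set.EqOn f
          (fun x => (b * ya - a * yb) / (b - a) + (yb - ya) / (b - a) * x) (Set.uIcc a b) := by
        intro x _
        simp only [hf]
        field_simp
        ring
      rw [intervalIntegral.integral_congr h1,
          intervalIntegral.integral_add intervalIntegrable_const hci,
          intervalIntegral.integral_const, intervalIntegral.integral_const_mul,
          integral_id, smul_eq_mul]
      field_simp
      ring
    exact le_of_eq hcalc

theorem stairDelta_area_le
    (h : ℕ) (hh : 1 ≤ h) (ρ : ℕ → ℝ) (v : ℕ → ℕ)
    (hρ : ∀ i < h, ρ (i + 1) ≤ ρ i) (hρh : 0 ≤ ρ h)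
    (hv0 : v 0 = 0) (hv : ∀ i < h, v i ≤ v (i + 1)) (hvh : 1 ≤ v h)
    (i₀ : ℕ) (hi₀lt : i₀ < h) (hi₀pos : v i₀ < v (i₀ + 1))
    (hi₀min : ∀ j < i₀, v (j + 1) = v j) :
    (volume (stairDelta h ρ v)).toReal - ρ h * (v h : ℝ) ≤
      (∑ i ∈ Finset.range h, ((v (i + 1) : ℝ) - (v i : ℝ)) * (ρ i - ρ h))
        - (ρ i₀ - ρ h) / 2 := by
  classical
  -- monotonicity of v and ρ
  have hvmono : ∀ j, j ≤ h → ∀ i, i ≤ j → v i ≤ v j := by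
    intro j
    induction j with
    | zero => intro _ i hi; exact le_of_eq (by rw [Nat.le_zero.mp hi])
    | succ n ih =>
      intro hn i hi
      rcases eq_or_lt_of_le hi with rfl | h'
      · exact le_rfl
      · exact le_trans (ih (by omega) i (by omega)) (hv n (by omega))
  have hρmono : ∀ j, j ≤ h → ∀ i, i ≤ j → ρ j ≤ ρ i := by
    intro j
    induction j with
    | zero => intro _ i hi; exact le_of_eq (by rw [Nat.le_zero.mp hi])
    | succ n ih =>
      intro hn i hi
      rcases eq_or_lt_of_le hi with rfl | h'
      · exact le_rfl
      · exact le_trans (hρ n (by omega)) (ih (by omega) i (by omega))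
  have hv0' : ∀ j, j ≤ i₀ → v j = 0 := by
    intro j
    induction j with
    | zero => intro _; exact hv0
    | succ n ih => intro hn; rw [hi₀min n (by omega)]; exact ih (by omega)
  -- the index τ
  set τ : ℕ → ℕ := fun i => Nat.findGreatest (fun j => v j = v i) h with hτdef
  have hτle : ∀ i, τ i ≤ h := fun i => Nat.findGreatest_le h
  have hτv : ∀ i, i ≤ h → v (τ i) = v i := fun i hi =>
    Nat.findGreatest_spec (P := fun j => v j = v i) hi rfl
  have hiτ : ∀ i, i ≤ h → i ≤ τ i := fun i hi =>
    Nat.le_findGreatest hi rfl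
  have hτmono : ∀ i, i < h → τ i ≤ τ (i + 1) := by
    intro i hi
    by_contra hcon
    push_neg at hcon
    have h1 : i + 1 ≤ τ (i + 1) := hiτ (i + 1) (by omega)
    have h2 : v (i + 1) ≤ v (τ i) := hvmono (τ i) (hτle i) (i + 1) (by omega)
    have h3 : v (τ i) = v i := hτv i (by omega)
    have h4 : v i ≤ v (i + 1) := hv i hi
    have h5 : v (τ i) = v (i + 1) := by omega
    exact (not_le.mpr hcon) (Nat.le_findGreatest (hτle i) h5)
  have hτeq : ∀ i, i < h → v (i + 1) = v i → τ (i + 1) ≤ τ i := by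
    intro i hi hvv
    have h5 : v (τ (i + 1)) = v i := by rw [hτv (i + 1) (by omega), hvv]
    exact Nat.le_findGreatest (hτle (i + 1)) h5
  have hτ0 : τ 0 = i₀ := by
    rw [hτdef]
    rw [Nat.findGreatest_eq_iff]
    refine ⟨by omega, fun _ => by rw [hv0' i₀ le_rfl, hv0], fun n hn hnh => ?_⟩
    have h1 : v (i₀ + 1) ≤ v n := hvmono n hnh (i₀ + 1) (by omega)
    have h2 : v i₀ = 0 := hv0' i₀ le_rfl
    omega
  have hτh : τ h = h := by
    rw [hτdef, Nat.findGreatest_eq_iff]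
    exact ⟨le_rfl, fun _ => rfl, fun n hn hnh => by omega⟩
  -- the staircase heights
  set g : ℕ → ℝ := fun i => ρ (τ i) with hgdef
  have hg_le : ∀ i, i ≤ h → g i ≤ ρ i := fun i hi =>
    hρmono (τ i) (hτle i) i (hiτ i hi)
  have hg_anti : ∀ i, i < h → g (i + 1) ≤ g i := fun i hi =>
    hρmono (τ (i + 1)) (hτle (i + 1)) (τ i) (hτmono i hi)
  have hg_nonneg : ∀ i, 0 ≤ g i := fun i =>
    le_trans hρh (hρmono h le_rfl (τ i) (hτle i))
  have hg0 : g 0 = ρ i₀ := by rw [hgdef]; simp only [hτ0]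
  have hgh : g h = ρ h := by rw [hgdef]; simp only [hτh]
  -- the trapezoids
  set T : ℕ → Set (ℝ × ℝ) := fun i =>
    {p : ℝ × ℝ | (v i : ℝ) ≤ p.1 ∧ p.1 ≤ (v (i + 1) : ℝ) ∧ 0 ≤ p.2 ∧
      ((v (i + 1) : ℝ) - (v i : ℝ)) * p.2 ≤
        ((v (i + 1) : ℝ) - p.1) * g i + (p.1 - (v i : ℝ)) * g (i + 1)} with hTdef
  -- the covering
  have hcover : stairDelta h ρ v ⊆ ⋃ i ∈ Finset.range h, T i := by
    rintro p ⟨⟨hpq, hpnc⟩, hpmem⟩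
    obtain ⟨hpx, hpy⟩ := hpmem
    obtain ⟨hx0, hxh⟩ := hpx
    -- find the strip
    set k : ℕ := Nat.findGreatest (fun i => (v i : ℝ) ≤ p.1) (h - 1) with hkdef
    have hk1 : (v k : ℝ) ≤ p.1 := by
      rw [hkdef]
      exact Nat.findGreatest_spec (P := fun i => (v i : ℝ) ≤ p.1) (Nat.zero_le _)
        (by show ((v 0 : ℕ) : ℝ) ≤ p.1; rw [hv0]; exact_mod_cast hx0)
    have hkh : k ≤ h - 1 := Nat.findGreatest_le _
    have hkh' : k < h := by omega
    have hk2 : p.1 ≤ (v (k + 1) : ℝ) := by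
      rcases eq_or_lt_of_le hkh with heq | hlt
      · have : k + 1 = h := by omega
        rw [this]; exact hxh
      · by_contra hcon
        push_neg at hcon
        have hng := Nat.findGreatest_is_greatest (P := fun i => (v i : ℝ) ≤ p.1)
          (n := h - 1) (k := k + 1) (by omega) (by omega)
        exact hng (le_of_lt hcon)
    refine Set.mem_biUnion (Finset.mem_range.2 hkh') ?_
    refine ⟨hk1, hk2, hpy, ?_⟩
    by_contra hcond
    push_neg at hcond
    -- then p is in the convex hull, contradiction
    have hab : (v k : ℝ) < (v (k + 1) : ℝ) := by
      rcases lt_or_eq_of_le (show (v k : ℝ) ≤ (v (k + 1) : ℝ) by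
        exact_mod_cast hv k hkh') with h' | h'
      · exact h'
      · exfalso
        have hx : p.1 = (v k : ℝ) := le_antisymm (h' ▸ hk2) hk1
        rw [← h', hx] at hcond
        simp at hcond
    set a : ℝ := (v k : ℝ)
    set b : ℝ := (v (k + 1) : ℝ)
    have hd : (0 : ℝ) < b - a := sub_pos.2 hab
    set t : ℝ := p.2 - ((b - p.1) * g k + (p.1 - a) * g (k + 1)) / (b - a) with htdef
    have ht : 0 < t := by
      rw [htdef]
      rw [sub_pos, div_lt_iff₀ hd]
      linarith [hcond]
    set lam : ℝ := (b - p.1) / (b - a) with hlamdef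
    have hlam0 : 0 ≤ lam := div_nonneg (by linarith) hd.le
    have hlam1 : 0 ≤ 1 - lam := by
      rw [hlamdef]
      rw [sub_nonneg, div_le_one hd]
      linarith
    set A : ℝ × ℝ := (a, g k + t) with hAdef
    set B : ℝ × ℝ := (b, g (k + 1) + t) with hBdef
    have hA : A ∈ quadrant + stairPoints h ρ v := by
      rw [Set.mem_add]
      refine ⟨(0, t), ⟨le_rfl, ht.le⟩, ((v (τ k) : ℝ), ρ (τ k)), ⟨τ k, hτle k, rfl⟩, ?_⟩
      rw [hτv k (by omega)]
      rw [hAdef, Prod.mk_add_mk, zero_add]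
      rw [Prod.mk.injEq]
      constructor
      · rfl
      · ring
    have hB : B ∈ quadrant + stairPoints h ρ v := by
      rw [Set.mem_add]
      refine ⟨(0, t), ⟨le_rfl, ht.le⟩, ((v (τ (k + 1)) : ℝ), ρ (τ (k + 1))),
        ⟨τ (k + 1), hτle (k + 1), rfl⟩, ?_⟩
      rw [hτv (k + 1) (by omega)]
      rw [hBdef, Prod.mk_add_mk, zero_add]
      rw [Prod.mk.injEq]
      exact ⟨rfl, by ring⟩
    have hseg : p ∈ segment ℝ A B := by
      refine ⟨lam, 1 - lam, hlam0, hlam1, by ring, ?_⟩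
      rw [hAdef, hBdef, Prod.smul_mk, Prod.smul_mk, Prod.mk_add_mk, smul_eq_mul,
        smul_eq_mul, smul_eq_mul, smul_eq_mul]
      have hx : lam * a + (1 - lam) * b = p.1 := by
        rw [hlamdef]; field_simp; ring
      have hy : lam * (g k + t) + (1 - lam) * (g (k + 1) + t) = p.2 := by
        rw [hlamdef, htdef]; field_simp; ring
      rw [hx, hy]
    exact hpnc (subset_closure (segment_subset_convexHull hA hB hseg))
  -- the area bound
  set A : ℕ → ℝ := fun i => ((v (i + 1) : ℝ) - (v i : ℝ)) * (g i + g (i + 1)) / 2 with hAdef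
  have hAnn : ∀ i ∈ Finset.range h, 0 ≤ A i := by
    intro i hi
    rw [Finset.mem_range] at hi
    have h1 : (v i : ℝ) ≤ (v (i + 1) : ℝ) := by exact_mod_cast hv i hi
    have h2 := hg_nonneg i
    have h3 := hg_nonneg (i + 1)
    show 0 ≤ ((v (i + 1) : ℝ) - (v i : ℝ)) * (g i + g (i + 1)) / 2
    have : (0:ℝ) ≤ (v (i + 1) : ℝ) - (v i : ℝ) := by linarith
    have : (0:ℝ) ≤ g i + g (i + 1) := by linarith
    positivity
  have hvol : volume (stairDelta h ρ v) ≤ ENNReal.ofReal (∑ i ∈ Finset.range h, A i) := by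
    calc volume (stairDelta h ρ v) ≤ volume (⋃ i ∈ Finset.range h, T i) := measure_mono hcover
      _ ≤ ∑ i ∈ Finset.range h, volume (T i) := measure_biUnion_finset_le _ _
      _ ≤ ∑ i ∈ Finset.range h, ENNReal.ofReal (A i) := by
          refine Finset.sum_le_sum fun i hi => ?_
          rw [Finset.mem_range] at hi
          exact trap_vol (v i : ℝ) (v (i + 1) : ℝ) (g i) (g (i + 1))
            (by exact_mod_cast hv i hi) (hg_nonneg i) (hg_nonneg (i + 1))
      _ = ENNReal.ofReal (∑ i ∈ Finset.range h, A i) :=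
          (ENNReal.ofReal_sum_of_nonneg hAnn).symm
  have hreal : (volume (stairDelta h ρ v)).toReal ≤ ∑ i ∈ Finset.range h, A i :=
    ENNReal.toReal_le_of_le_ofReal (Finset.sum_nonneg hAnn) hvol
  -- the arithmetic
  have hkey : ∀ i ∈ Finset.range h, A i ≤
      ((v (i + 1) : ℝ) - (v i : ℝ)) * (ρ i - ρ h) + ρ h * ((v (i + 1) : ℝ) - (v i : ℝ))
        - (g i - g (i + 1)) / 2 := by
    intro i hi
    rw [Finset.mem_range] at hi
    rcases eq_or_lt_of_le (hv i hi) with heq | hlt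
    · have hgg : g i = g (i + 1) :=
        le_antisymm
          (hρmono (τ i) (hτle i) (τ (i + 1)) (hτeq i hi heq.symm))
          (hg_anti i hi)
      have hc : (v (i + 1) : ℝ) = (v i : ℝ) := by rw [heq]
      show ((v (i + 1) : ℝ) - (v i : ℝ)) * (g i + g (i + 1)) / 2 ≤ _
      rw [hc, hgg]
      simp [sub_self]
    · have hd1 : (1 : ℝ) ≤ (v (i + 1) : ℝ) - (v i : ℝ) := by
        have : v i + 1 ≤ v (i + 1) := hlt
        have : ((v i : ℝ) + 1 : ℝ) ≤ (v (i + 1) : ℝ) := by exact_mod_cast this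
        linarith
      have h1 : g i ≤ ρ i := hg_le i (by omega)
      have h2 : g (i + 1) ≤ g i := hg_anti i hi
      show ((v (i + 1) : ℝ) - (v i : ℝ)) * (g i + g (i + 1)) / 2 ≤ _
      nlinarith [mul_nonneg (by linarith : (0:ℝ) ≤ (v (i + 1) : ℝ) - (v i : ℝ) - 1)
          (by linarith : (0:ℝ) ≤ g i - g (i + 1)),
        mul_nonneg (by linarith : (0:ℝ) ≤ (v (i + 1) : ℝ) - (v i : ℝ))
          (by linarith : (0:ℝ) ≤ ρ i - g i)]
  have hsum := Finset.sum_le_sum hkey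
  have hδsum : ∑ i ∈ Finset.range h, ((v (i + 1) : ℝ) - (v i : ℝ)) = (v h : ℝ) := by
    rw [Finset.sum_range_sub (fun i => (v i : ℝ))]
    rw [hv0]
    simp
  have hgsum : ∑ i ∈ Finset.range h, (g i - g (i + 1)) = ρ i₀ - ρ h := by
    rw [Finset.sum_range_sub' g, hg0, hgh]
  have hexp : ∑ i ∈ Finset.range h,
      (((v (i + 1) : ℝ) - (v i : ℝ)) * (ρ i - ρ h) + ρ h * ((v (i + 1) : ℝ) - (v i : ℝ))
        - (g i - g (i + 1)) / 2)
      = (∑ i ∈ Finset.range h, ((v (i + 1) : ℝ) - (v i : ℝ)) * (ρ i - ρ h))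
        + ρ h * (v h : ℝ) - (ρ i₀ - ρ h) / 2 := by
    rw [Finset.sum_sub_distrib, Finset.sum_add_distrib, ← Finset.mul_sum, hδsum,
      ← Finset.sum_div, hgsum]
  rw [hexp] at hsum
  linarith
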